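/- Let q ∈ ℂ \ {0} with |q| ≠ 1, and let f, g be polynomials over ℂ that are relatively q-prime. Then gcd(f, D_q f) and gcd(g, D_q g) are relatively q-prime, and moreover gcd(f, D_q f) and gcd(g, D_q g) are relatively prime (share no common linear factor). -/

import Mathlib

open Polynomial

noncomputable section

/-- q-number [n]_q = 1 + q + ... + q^{n-1}. -/
def qNum (q : ℂ) (n : ℕ) : ℂ := ∑ i ∈ Finset.range n, q ^ i

/-- q-factorial. -/
def qFact (q : ℂ) (n : ℕ) : ℂ := ∏ i ∈ Finset.range n, qNum q (i + 1)

/-- q-binomial coefficient. -/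
def qBinom (q : ℂ) (k j : ℕ) : ℂ := qFact q k / (qFact q j * qFact q (k - j))

/-- q-derivative of a function. -/
def Dqf (q : ℂ) (f : ℂ → ℂ) : ℂ → ℂ := fun z => (f (q * z) - f z) / (q * z - z)

/-- q-analogue of the power (z-w)^n : [z-w]_q^n = (z-w)(z-qw)...(z-q^{n-1}w). -/
def qPow (q w : ℂ) (n : ℕ) : Polynomial ℂ := ∏ i ∈ Finset.range n, (X - C (q ^ i * w))

/-- q-derivative as a polynomial operation. -/
def qDeriv (q : ℂ) (f : Polynomial ℂ) : Polynomial ℂ :=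
  C (q - 1)⁻¹ * ((f.comp (C q * X) - f) /ₘ X)

/-- `w` is a zero of `f` with q-weight `n`. -/
def IsZeroQWeight (q : ℂ) (f : Polynomial ℂ) (w : ℂ) (n : ℕ) : Prop :=
  (w = 0 ∧ f ≠ 0 ∧ Polynomial.rootMultiplicity 0 f = n) ∨
  (w ≠ 0 ∧ (∀ k < n, f.eval (q ^ k * w) = 0) ∧ f.eval (q ^ n * w) ≠ 0)

/-- Canonical q-chain factorization of a polynomial. -/
structure QFactorization (q : ℂ) (P : Polynomial ℂ) where
  N : ℕ
  z : Fin N → ℂ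
  n : Fin N → ℕ
  A : ℂ
  A_ne : A ≠ 0
  n_pos : ∀ j, 1 ≤ n j
  eq : P = Polynomial.C A * ∏ j, qPow q (z j) (n j)
  deg_sum : ∑ j, n j = P.natDegree
  chain : ∀ j : Fin N,
    IsZeroQWeight q (∏ k ∈ Finset.univ.filter (fun k => j ≤ k), qPow q (z k) (n k)) (z j) (n j)
  maximal : ∀ j : Fin N, z j ≠ 0 →
    (∏ k ∈ Finset.univ.filter (fun k => j ≤ k), qPow q (z k) (n k)).eval (q⁻¹ * z j) ≠ 0

/-- q-difference radical associated to a canonical factorization. -/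
def radQ {q : ℂ} {P : Polynomial ℂ} (F : QFactorization q P) : Polynomial ℂ :=
  ∏ j, (X - C (F.z j))

local instance : DecidableEq (Polynomial ℂ) := Classical.decEq _

/-- Truncated q-radical of level μ. -/
def radTruncQ {q : ℂ} {P : Polynomial ℂ} (F : QFactorization q P) (μ : ℕ) : Polynomial ℂ :=
  EuclideanDomain.gcd (∏ j, qPow q (F.z j) (F.n j)) (∏ j, qPow q (F.z j) μ)

/-- f and g have a nonconstant common q-divisor. -/
def HasCommonQDivisor (q : ℂ) (f g : Polynomial ℂ) : Prop :=
  ∃ (z₀ z₁ z₂ : ℂ) (m n : ℕ) (F G : Polynomial ℂ), 1 ≤ m ∧ 1 ≤ n ∧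
    f = qPow q z₁ m * F ∧ g = qPow q z₂ n * G ∧ (z₀ = z₁ ∨ z₀ = z₂) ∧
    f * g = qPow q z₀ (m + n) * (F * G)

/-- q-shifted power [P]_q^n(z) = P(z)P(qz)...(P(q^{n-1}z)). -/
def qShiftPow (q : ℂ) (P : Polynomial ℂ) (n : ℕ) : Polynomial ℂ :=
  ∏ i ∈ Finset.range n, P.comp (C (q ^ i) * X)

/-- gcd of a list of polynomials. -/
def gcdList (l : List (Polynomial ℂ)) : Polynomial ℂ := l.foldr EuclideanDomain.gcd 0
lemma qPow_one (q w : ℂ) : qPow q w 1 = X - C w := by simp [qPow]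

lemma qPow_two (q w : ℂ) : qPow q w 2 = (X - C w) * (X - C (q * w)) := by
  simp [qPow, Finset.prod_range_succ]

lemma qPow_eval_chain {q z : ℂ} {m i : ℕ} (hi : i < m) :
    (qPow q z m).eval (q ^ i * z) = 0 := by
  rw [qPow, eval_prod]
  exact Finset.prod_eq_zero (Finset.mem_range.2 hi) (by simp)

lemma qPow_add (q z : ℂ) (m n : ℕ) :
    qPow q z (m + n) = qPow q z m * qPow q (q ^ m * z) n := by
  rw [qPow, Finset.prod_range_add]
  congr 1
  refine Finset.prod_congr rfl fun i _ => ?_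
  rw [pow_add]; ring_nf

lemma qPow_ne_zero (q z : ℂ) (m : ℕ) : qPow q z m ≠ 0 :=
  Finset.prod_ne_zero_iff.2 fun i _ => X_sub_C_ne_zero _

/-- main sufficiency lemma -/
lemma hcd_of_root (q w : ℂ) (f g : Polynomial ℂ)
    (hf : f.eval w = 0) (hg : g.eval (q * w) = 0) : HasCommonQDivisor q f g := by
  obtain ⟨F, hF⟩ := (dvd_iff_isRoot.2 hf : X - C w ∣ f)
  obtain ⟨G, hG⟩ := (dvd_iff_isRoot.2 hg : X - C (q * w) ∣ g)
  exact ⟨w, w, q * w, 1, 1, F, G, le_refl 1, le_refl 1,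
    by rw [qPow_one]; exact hF, by rw [qPow_one]; exact hG, Or.inl rfl,
    by rw [show (1+1 : ℕ) = 2 from rfl, qPow_two, hF, hG]; ring⟩

lemma hcd_of_root' (q v : ℂ) (f g : Polynomial ℂ)
    (hg : g.eval v = 0) (hf : f.eval (q * v) = 0) : HasCommonQDivisor q f g := by
  obtain ⟨F, hF⟩ := (dvd_iff_isRoot.2 hf : X - C (q * v) ∣ f)
  obtain ⟨G, hG⟩ := (dvd_iff_isRoot.2 hg : X - C v ∣ g)
  exact ⟨v, q * v, v, 1, 1, F, G, le_refl 1, le_refl 1,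
    by rw [qPow_one]; exact hF, by rw [qPow_one]; exact hG, Or.inr rfl,
    by rw [show (1+1 : ℕ) = 2 from rfl, qPow_two, hF, hG]; ring⟩

lemma qDeriv_root {q : ℂ} (hq1 : q ≠ 1) {f : Polynomial ℂ} {w : ℂ}
    (hd : (qDeriv q f).eval w = 0) : f.eval (q * w) = f.eval w := by
  set P := f.comp (C q * X) - f with hP
  have hXdvd : X ∣ P := by
    rw [X_dvd_iff]
    simp [hP, coeff_zero_eq_eval_zero]
  have hQ : P = X * (P /ₘ X) := by
    have := modByMonic_add_div P (X : ℂ[X])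
    rw [(modByMonic_eq_zero_iff_dvd (monic_X)).2 hXdvd, zero_add] at this
    exact this.symm
  have h1 : (q - 1)⁻¹ ≠ 0 := inv_ne_zero (sub_ne_zero.2 hq1)
  rw [qDeriv, eval_mul, eval_C, mul_eq_zero] at hd
  have hQw : (P /ₘ X).eval w = 0 := hd.resolve_left h1
  have : P.eval w = 0 := by rw [hQ]; simp [hQw]
  have := this
  rw [hP] at this
  simp only [eval_sub, eval_comp, eval_mul, eval_C, eval_X] at this
  exact sub_eq_zero.1 this

lemma eval_zero_of_dvd {p r : Polynomial ℂ} {w : ℂ} (hpr : p ∣ r) (hw : p.eval w = 0) :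
    r.eval w = 0 := by
  obtain ⟨c, rfl⟩ := hpr; simp [hw]


/-- gcd(f, D_q f) and gcd(g, D_q g) inherit relative q-primeness, and they are coprime. -/
theorem gcd_qDeriv_relPrime (q : ℂ) (hq0 : q ≠ 0) (habs : ‖q‖ ≠ 1)
    (f g : Polynomial ℂ) (h : ¬ HasCommonQDivisor q f g) :
    ¬ HasCommonQDivisor q (EuclideanDomain.gcd f (qDeriv q f))
        (EuclideanDomain.gcd g (qDeriv q g)) ∧
      IsCoprime (EuclideanDomain.gcd f (qDeriv q f)) (EuclideanDomain.gcd g (qDeriv q g)) := by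
  have hq1 : q ≠ 1 := fun hq => habs (by rw [hq]; simp)
  set df := EuclideanDomain.gcd f (qDeriv q f) with hdf
  set dg := EuclideanDomain.gcd g (qDeriv q g) with hdg
  have hdff : df ∣ f := EuclideanDomain.gcd_dvd_left _ _
  have hdgg : dg ∣ g := EuclideanDomain.gcd_dvd_left _ _
  constructor
  · rintro ⟨z₀, z₁, z₂, m, n, F, G, hm, hn, hF, hG, hz, hprod⟩
    have fchain : ∀ i < m, f.eval (q ^ i * z₁) = 0 := fun i hi =>
      eval_zero_of_dvd hdff (by rw [hF]; simp [qPow_eval_chain hi])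
    have gchain : ∀ j < n, g.eval (q ^ j * z₂) = 0 := fun j hj =>
      eval_zero_of_dvd hdgg (by rw [hG]; simp [qPow_eval_chain hj])
    have hf1 : f.eval z₁ = 0 := by
      have := fchain 0 hm; simpa using this
    have hg2 : g.eval z₂ = 0 := by
      have := gchain 0 hn; simpa using this
    by_cases hF0 : F = 0
    · have hf0 : f = 0 := by
        have : df = 0 := by rw [hF, hF0, mul_zero]
        rw [this] at hdff; exact zero_dvd_iff.1 hdff
      exact h (hcd_of_root' q z₂ f g hg2 (by simp [hf0]))
    by_cases hG0 : G = 0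
    · have hg0 : g = 0 := by
        have : dg = 0 := by rw [hG, hG0, mul_zero]
        rw [this] at hdgg; exact zero_dvd_iff.1 hdgg
      exact h (hcd_of_root q z₁ f g hf1 (by simp [hg0]))
    have hcan : qPow q z₁ m * qPow q z₂ n = qPow q z₀ (m + n) :=
      mul_right_cancel₀ (mul_ne_zero hF0 hG0) (by
        calc qPow q z₁ m * qPow q z₂ n * (F * G)
            = qPow q z₁ m * F * (qPow q z₂ n * G) := by ring
          _ = df * dg := by rw [hF, hG]
          _ = qPow q z₀ (m + n) * (F * G) := hprod)
    rcases hz with rfl | rfl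
    · -- z₀ = z₁
      rw [qPow_add] at hcan
      have hcan2 : qPow q z₂ n = qPow q (q ^ m * z₀) n :=
        mul_left_cancel₀ (qPow_ne_zero q z₀ m) hcan
      have hev : (qPow q z₂ n).eval (q ^ m * z₀) = 0 := by
        rw [hcan2]
        have := qPow_eval_chain (q := q) (z := q ^ m * z₀) (i := 0) hn
        simpa using this
      obtain ⟨j, hj, hfac⟩ : ∃ j < n, q ^ m * z₀ = q ^ j * z₂ := by
        rw [qPow, eval_prod, Finset.prod_eq_zero_iff] at hev
        obtain ⟨j, hj, e⟩ := hev
        exact ⟨j, Finset.mem_range.1 hj, by simpa [sub_eq_zero] using e⟩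
      have hw : q * (q ^ (m - 1) * z₀) = q ^ m * z₀ := by
        rw [← mul_assoc, ← pow_succ', Nat.sub_add_cancel hm]
      exact h (hcd_of_root q (q ^ (m - 1) * z₀) f g
        (fchain _ (Nat.sub_lt hm one_pos))
        (by rw [hw, hfac]; exact gchain j hj))
    · -- z₀ = z₂
      rw [add_comm, qPow_add] at hcan
      have hcan2 : qPow q z₁ m = qPow q (q ^ n * z₀) m :=
        mul_right_cancel₀ (qPow_ne_zero q z₀ n) (by
          rw [mul_comm (qPow q z₀ n)] at hcan; exact hcan)
      have hev : (qPow q z₁ m).eval (q ^ n * z₀) = 0 := by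
        rw [hcan2]
        have := qPow_eval_chain (q := q) (z := q ^ n * z₀) (i := 0) hm
        simpa using this
      obtain ⟨j, hj, hfac⟩ : ∃ j < m, q ^ n * z₀ = q ^ j * z₁ := by
        rw [qPow, eval_prod, Finset.prod_eq_zero_iff] at hev
        obtain ⟨j, hj, e⟩ := hev
        exact ⟨j, Finset.mem_range.1 hj, by simpa [sub_eq_zero] using e⟩
      have hw : q * (q ^ (n - 1) * z₀) = q ^ n * z₀ := by
        rw [← mul_assoc, ← pow_succ', Nat.sub_add_cancel hn]
      exact h (hcd_of_root' q (q ^ (n - 1) * z₀) f g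
        (gchain _ (Nat.sub_lt hn one_pos))
        (by rw [hw, hfac]; exact fchain j hj))
  · rw [← EuclideanDomain.gcd_isUnit_iff]
    by_contra hu
    set D := EuclideanDomain.gcd df dg with hD
    obtain ⟨w, hw⟩ := Complex.isAlgClosed.exists_root D
      (fun e => hu (Polynomial.isUnit_iff_degree_eq_zero.2 e))
    have hDdf : D ∣ df := EuclideanDomain.gcd_dvd_left _ _
    have hDdg : D ∣ dg := EuclideanDomain.gcd_dvd_right _ _
    have hfw : f.eval w = 0 := eval_zero_of_dvd (hDdf.trans hdff) hw
    have hgw : g.eval w = 0 := eval_zero_of_dvd (hDdg.trans hdgg) hw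
    have hgqw : g.eval (q * w) = 0 := by
      have := qDeriv_root hq1 (f := g) (w := w)
        (eval_zero_of_dvd (hDdg.trans (EuclideanDomain.gcd_dvd_right _ _)) hw)
      rw [this, hgw]
    exact h (hcd_of_root q w f g hfw hgqw)
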